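/- Positive definiteness propagates through the ESDKF recursion: if P_{k-1,i} > 0 for all sensors i, A_{k-1} is invertible, θ > 0, Q_{k-1} ≥ 0, Q̄_{k-1} ≥ 0, R_{k,i} > 0, and the weights a_{i,j}(k) are nonnegative with a_{i,i}(k) > 0 and rows summing to 1, then P̄_{k,i} > 0, P̃_{k,i} > 0, and P_{k,i} = (∑_{j ∈ N_i} a_{i,j}(k) P̃_{k,j}^{-1})^{-1} > 0 for all i. -/

import Mathlib

open Matrix

section Aux
variable {n : ℕ}

lemma myPosDef_smul {c : ℝ} {M : Matrix (Fin n) (Fin n) ℝ} (hc : 0 < c) (hM : M.PosDef) :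
    (c • M).PosDef := by
  refine Matrix.PosDef.of_dotProduct_mulVec_pos ?_ fun x hx => ?_
  · unfold Matrix.IsHermitian
    rw [conjTranspose_smul, hM.1.eq]
    simp
  · rw [smul_mulVec, dotProduct_smul, smul_eq_mul]
    exact mul_pos hc (hM.dotProduct_mulVec_pos hx)

lemma myPosSemidef_smul {c : ℝ} {M : Matrix (Fin n) (Fin n) ℝ} (hc : 0 ≤ c) (hM : M.PosSemidef) :
    (c • M).PosSemidef := by
  refine Matrix.PosSemidef.of_dotProduct_mulVec_nonneg ?_ fun x => ?_
  · unfold Matrix.IsHermitian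
    rw [conjTranspose_smul, hM.1.eq]
    simp
  · rw [smul_mulVec, dotProduct_smul, smul_eq_mul]
    exact mul_nonneg hc (hM.dotProduct_mulVec_nonneg x)

lemma myPosDef_conj {A M : Matrix (Fin n) (Fin n) ℝ} (hA : IsUnit A) (hM : M.PosDef) :
    (A * M * Aᵀ).PosDef := by
  have hs : (A * M * Aᵀ).PosSemidef := by
    simpa [conjTranspose_eq_transpose_of_trivial] using hM.posSemidef.mul_mul_conjTranspose_same A
  refine Matrix.PosDef.of_dotProduct_mulVec_pos hs.1 fun x hx => ?_
  have hAT : IsUnit Aᵀ := by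
    rw [Matrix.isUnit_iff_isUnit_det, det_transpose, ← Matrix.isUnit_iff_isUnit_det]; exact hA
  have hy : Aᵀ *ᵥ x ≠ 0 := by
    intro h
    exact hx (by simpa using (Matrix.mulVec_injective_iff_isUnit.2 hAT) (h.trans (Matrix.mulVec_zero _).symm))
  have h2 := hM.dotProduct_mulVec_pos hy
  rw [star_trivial] at h2
  have e1 : (A * M * Aᵀ) *ᵥ x = A *ᵥ (M *ᵥ (Aᵀ *ᵥ x)) := by
    rw [mulVec_mulVec, mulVec_mulVec]
  rw [star_trivial, e1, dotProduct_mulVec, ← mulVec_transpose]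
  exact h2
end Aux

lemma myInfo {n m : ℕ} {P : Matrix (Fin n) (Fin n) ℝ} (hP : P.PosDef)
    (H : Matrix (Fin m) (Fin n) ℝ) {R : Matrix (Fin m) (Fin m) ℝ} (hR : R.PosDef) :
    ((1 - (P * Hᵀ * (H * P * Hᵀ + R)⁻¹) * H) * P).PosDef := by
  have hHT : Hᵀ = Hᴴ := (conjTranspose_eq_transpose_of_trivial H).symm
  have hS : (H * P * Hᵀ + R).PosDef := by
    rw [hHT]
    exact Matrix.PosDef.posSemidef_add (hP.posSemidef.mul_mul_conjTranspose_same H) hR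
  set S := H * P * Hᵀ + R with hSdef
  have hM : (P⁻¹ + Hᵀ * R⁻¹ * H).PosDef := by
    have h1 : (Hᵀ * R⁻¹ * H).PosSemidef := by
      rw [hHT]; exact hR.inv.posSemidef.conjTranspose_mul_mul_same H
    exact hP.inv.add_posSemidef h1
  set M := P⁻¹ + Hᵀ * R⁻¹ * H with hMdef
  have hSd : IsUnit S.det := (Matrix.isUnit_iff_isUnit_det S).1 hS.isUnit
  have hRd : IsUnit R.det := (Matrix.isUnit_iff_isUnit_det R).1 hR.isUnit
  have hPd : IsUnit P.det := (Matrix.isUnit_iff_isUnit_det P).1 hP.isUnit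
  have hSinv : S⁻¹ * S = 1 := Matrix.nonsing_inv_mul S hSd
  have hR1 : R * R⁻¹ = 1 := Matrix.mul_nonsing_inv R hRd
  have hPP : P * P⁻¹ = 1 := Matrix.mul_nonsing_inv P hPd
  have key : S⁻¹ + S⁻¹ * (H * P * Hᵀ) * R⁻¹ = R⁻¹ := by
    calc S⁻¹ + S⁻¹ * (H * P * Hᵀ) * R⁻¹
        = S⁻¹ * (R * R⁻¹) + S⁻¹ * ((H * P * Hᵀ) * R⁻¹) := by
          rw [hR1, mul_one, Matrix.mul_assoc]
      _ = S⁻¹ * ((R + H * P * Hᵀ) * R⁻¹) := by rw [← Matrix.mul_add, ← Matrix.add_mul]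
      _ = S⁻¹ * (S * R⁻¹) := by rw [hSdef, add_comm]
      _ = (S⁻¹ * S) * R⁻¹ := by rw [Matrix.mul_assoc]
      _ = R⁻¹ := by rw [hSinv, one_mul]
  have key' : S⁻¹ * H + S⁻¹ * (H * (P * (Hᵀ * (R⁻¹ * H)))) = R⁻¹ * H := by
    have h2 := congrArg (fun X => X * H) key
    simpa only [Matrix.add_mul, Matrix.mul_assoc] using h2
  have main : ((1 - (P * Hᵀ * S⁻¹) * H) * P) * M = 1 := by
    rw [hMdef]
    simp only [Matrix.sub_mul, Matrix.mul_add, Matrix.one_mul, Matrix.mul_assoc, hPP,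
      Matrix.mul_one]
    rw [sub_add_sub_comm, ← Matrix.mul_add, ← Matrix.mul_add, key']
    simp
  rw [show (1 - (P * Hᵀ * S⁻¹) * H) * P = M⁻¹ from (Matrix.inv_eq_left_inv main).symm]
  exact hM.inv

lemma myPosSemidef_sum {n : ℕ} {ι : Type*} (s : Finset ι) (f : ι → Matrix (Fin n) (Fin n) ℝ)
    (hf : ∀ j ∈ s, (f j).PosSemidef) : (∑ j ∈ s, f j).PosSemidef := by
  classical
  induction s using Finset.induction_on with
  | empty => simpa using Matrix.PosSemidef.zero
  | @insert b t hj ih =>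
    rw [Finset.sum_insert hj]
    exact (hf b (Finset.mem_insert_self b t)).add
      (ih fun j hjt => hf j (Finset.mem_insert_of_mem hjt))

/-- Positive definiteness propagates through the ESDKF recursion: if all
`P_{k-1,i} > 0`, `A_{k-1}` invertible, `θ > 0`, `Q_{k-1} ≥ 0`, `Q̄_{k-1} ≥ 0`,
`R_{k,i} > 0`, and the weights are nonnegative with positive diagonal and rows
summing to 1, then `P̄_{k,i} > 0`, `P̃_{k,i} > 0` and
`P_{k,i} = (∑ⱼ a_{i,j} P̃_{k,j}⁻¹)⁻¹ > 0` for every `i`. -/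
theorem esdkf_posdef_propagates {n N : ℕ} {m : Fin N → ℕ}
    (Pprev : Fin N → Matrix (Fin n) (Fin n) ℝ) (hPprev : ∀ i, (Pprev i).PosDef)
    (A : Matrix (Fin n) (Fin n) ℝ) (hA : IsUnit A)
    (θ : ℝ) (hθ : 0 < θ)
    (Q Qbar : Matrix (Fin n) (Fin n) ℝ)
    (hQ : Q.PosSemidef) (hQbar : Qbar.PosSemidef)
    (H : (i : Fin N) → Matrix (Fin (m i)) (Fin n) ℝ)
    (R : (i : Fin N) → Matrix (Fin (m i)) (Fin (m i)) ℝ)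
    (hR : ∀ i, (R i).PosDef)
    (a : Fin N → Fin N → ℝ) (ha : ∀ i j, 0 ≤ a i j)
    (hdiag : ∀ i, 0 < a i i) (hrow : ∀ i, ∑ j, a i j = 1)
    -- ESDKF recursion
    (Pbar : Fin N → Matrix (Fin n) (Fin n) ℝ)
    (hPbar : ∀ i, Pbar i = (1 + θ) • (A * Pprev i * Aᵀ) + ((1 + θ) / θ) • Qbar + Q)
    (K : (i : Fin N) → Matrix (Fin n) (Fin (m i)) ℝ)
    (hK : ∀ i, K i = Pbar i * (H i)ᵀ * (H i * Pbar i * (H i)ᵀ + R i)⁻¹)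
    (Ptil : Fin N → Matrix (Fin n) (Fin n) ℝ)
    (hPtil : ∀ i, Ptil i = (1 - K i * H i) * Pbar i) :
    ∀ i, (Pbar i).PosDef ∧ (Ptil i).PosDef ∧
      ((∑ j, a i j • (Ptil j)⁻¹)⁻¹).PosDef := by
  have hPbar_pd : ∀ i, (Pbar i).PosDef := by
    intro i
    rw [hPbar i]
    have h1 : ((1 + θ) • (A * Pprev i * Aᵀ)).PosDef :=
      myPosDef_smul (by linarith) (myPosDef_conj hA (hPprev i))
    have h2 : (((1 + θ) / θ) • Qbar).PosSemidef :=
      myPosSemidef_smul (by positivity) hQbar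
    exact (h1.add_posSemidef h2).add_posSemidef hQ
  have hPtil_pd : ∀ i, (Ptil i).PosDef := by
    intro i
    rw [hPtil i, hK i]
    exact myInfo (hPbar_pd i) (H i) (hR i)
  intro i
  refine ⟨hPbar_pd i, hPtil_pd i, ?_⟩
  have hsum : (∑ j, a i j • (Ptil j)⁻¹).PosDef := by
    rw [← Finset.add_sum_erase Finset.univ _ (Finset.mem_univ i)]
    have hterm : (a i i • (Ptil i)⁻¹).PosDef := myPosDef_smul (hdiag i) (hPtil_pd i).inv
    have hrest : (∑ j ∈ Finset.univ.erase i, a i j • (Ptil j)⁻¹).PosSemidef :=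
      myPosSemidef_sum _ _ fun j _ => myPosSemidef_smul (ha i j) (hPtil_pd j).inv.posSemidef
    exact hterm.add_posSemidef hrest
  exact hsum.inv
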